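/- arXiv:2504.02038 — 2 statements merged into one kernel-verified Lean document; each statement's English description precedes it below -/
import Mathlib

section
/- Let σ : Γ → 2^V be a vertex-induced topological triangulation of a (d−1)-dimensional simplex and let θ be a special l.s.o.p. for K[Γ]. Then L_θ(Γ) is spanned as a K-vector space by the classes of monomials whose underlying face is interior and does not contain any vertex of excess 0 (a vertex j has excess 0 when |σ({j})| = 1). -/
open Finset MvPolynomial

set_option synthInstance.maxHeartbeats 1000000
set_option maxHeartbeats 4000000

noncomputable section

namespace LocalFace

/-! ## Geometric realization of abstract simplicial complexes -/

/-- The point of `ℝ^n` corresponding to the vertex `j`. -/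
def stdPt (n : ℕ) (j : Fin n) : EuclideanSpace ℝ (Fin n) :=
  EuclideanSpace.single j 1

/-- The geometric simplex spanned by a finite set of vertices. -/
def faceHull {n : ℕ} (F : Finset (Fin n)) : Set (EuclideanSpace ℝ (Fin n)) :=
  convexHull ℝ (stdPt n '' ↑F)

/-- The geometric realization of a collection of faces. -/
def realization {n : ℕ} (S : Set (Finset (Fin n))) : Set (EuclideanSpace ℝ (Fin n)) :=
  ⋃ F ∈ S, faceHull F

/-- The barycenter of a face. -/
def barycenter {n : ℕ} (F : Finset (Fin n)) : EuclideanSpace ℝ (Fin n) :=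
  (F.card : ℝ)⁻¹ • ∑ j ∈ F, stdPt n j

/-- `X` is homeomorphic to a closed ball of dimension `m`. -/
def IsBall {n : ℕ} (X : Set (EuclideanSpace ℝ (Fin n))) (m : ℕ) : Prop :=
  Nonempty (↥X ≃ₜ ↥(Metric.closedBall (0 : EuclideanSpace ℝ (Fin m)) 1))

/-- `x` is a manifold-interior point of the `m`-dimensional ball `X`: it has an
open neighbourhood in `X` homeomorphic to `ℝ^m`. -/
def IsInteriorPt {n : ℕ} (X : Set (EuclideanSpace ℝ (Fin n))) (m : ℕ)
    (x : EuclideanSpace ℝ (Fin n)) : Prop :=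
  ∃ U : Set (↥X), IsOpen U ∧ (∃ hx : x ∈ X, (⟨x, hx⟩ : ↥X) ∈ U) ∧
    Nonempty (↥U ≃ₜ EuclideanSpace ℝ (Fin m))

/-- A topological triangulation `σ : Γ → 2^V` of the `(d-1)`-dimensional simplex on
`V = {1,…,d}`, where `Γ` is a finite abstract simplicial complex with vertex set
`{1,…,n}`.  For every `U ⊆ V` the realization of `Γ_U = σ⁻¹(2^U)` is a ball of
dimension `|U| - 1`, and `σ⁻¹(U)` consists of the interior faces of this ball. -/
structure TopTriangulation (n d : ℕ) where
  faces : Finset (Finset (Fin n))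
  empty_mem : ∅ ∈ faces
  down_closed : ∀ F ∈ faces, ∀ G ⊆ F, G ∈ faces
  vertex_mem : ∀ j : Fin n, {j} ∈ faces
  σ : Finset (Fin n) → Finset (Fin d)
  mono : ∀ ⦃F G : Finset (Fin n)⦄, F ∈ faces → G ∈ faces → F ⊆ G → σ F ⊆ σ G
  sigma_empty_iff : ∀ F ∈ faces, (σ F = ∅ ↔ F = ∅)
  ball : ∀ U : Finset (Fin d), U.Nonempty →
    IsBall (realization {F | F ∈ faces ∧ σ F ⊆ U}) (U.card - 1)
  interior_iff : ∀ U : Finset (Fin d), U.Nonempty → ∀ F ∈ faces, F.Nonempty → σ F ⊆ U →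
    (σ F = U ↔
      IsInteriorPt (realization {F | F ∈ faces ∧ σ F ⊆ U}) (U.card - 1) (barycenter F))

namespace TopTriangulation

variable {n d : ℕ}

/-- A triangulation is vertex-induced if there is no face `G` of `Γ` and proper subset
`F ⊊ σ(G)` such that `σ({j}) ⊆ F` for all vertices `j` of `G`. -/
def VertexInduced (T : TopTriangulation n d) : Prop :=
  ¬ ∃ G ∈ T.faces, ∃ F ⊂ T.σ G, ∀ j ∈ G, T.σ {j} ⊆ F

/-- A triangulation is quasi-geometric if there is no face `G` of `Γ` and proper subset
`F ⊊ σ(G)` with `|F| < |G|` such that `σ({j}) ⊆ F` for all vertices `j` of `G`. -/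
def QuasiGeometric (T : TopTriangulation n d) : Prop :=
  ¬ ∃ G ∈ T.faces, ∃ F ⊂ T.σ G, F.card < G.card ∧ ∀ j ∈ G, T.σ {j} ⊆ F

/-- A face is interior if `σ(F) = V`. -/
def InteriorFace (T : TopTriangulation n d) (F : Finset (Fin n)) : Prop :=
  F ∈ T.faces ∧ T.σ F = Finset.univ

end TopTriangulation

/-! ## h-polynomials and local h-polynomials -/

/-- The `h`-polynomial of the subcomplex `Γ_U = σ⁻¹(2^U)`, a complex of
dimension `|U| - 1`. -/
def hPoly {n d : ℕ} (T : TopTriangulation n d) (U : Finset (Fin d)) : Polynomial ℤ :=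
  ∑ F ∈ T.faces.filter (fun F => T.σ F ⊆ U),
    Polynomial.X ^ F.card * (1 - Polynomial.X) ^ (U.card - F.card)

/-- The local `h`-polynomial `ℓ(Γ; t) = ∑_{U ⊆ V} (-1)^{|V|-|U|} h(Γ_U; t)`. -/
def localHPoly {n d : ℕ} (T : TopTriangulation n d) : Polynomial ℤ :=
  ∑ U : Finset (Fin d), (-1 : Polynomial ℤ) ^ (d - U.card) * hPoly T U

/-! ## Face rings and local face modules -/

variable (K : Type) [Field K] {n d : ℕ}

/-- The squarefree monomial `x^F` attached to a set of vertices. -/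
def faceMonomial (F : Finset (Fin n)) : MvPolynomial (Fin n) K :=
  ∏ j ∈ F, X j

/-- The Stanley–Reisner ideal of `Γ`. -/
def faceIdeal (T : TopTriangulation n d) : Ideal (MvPolynomial (Fin n) K) :=
  Ideal.span {p | ∃ F : Finset (Fin n), F ∉ T.faces ∧ p = faceMonomial K F}

/-- A family `θ` of linear forms is special if `θ i` is supported on the
variables `x_j` with `i ∈ σ({j})`. -/
def IsSpecial (T : TopTriangulation n d) (θ : Fin d → MvPolynomial (Fin n) K) : Prop :=
  ∀ i : Fin d, ∀ e ∈ (θ i).support, ∃ j : Fin n, i ∈ T.σ {j} ∧ e = Finsupp.single j 1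

/-- The ideal of the polynomial ring generated by the Stanley–Reisner relations
together with the linear forms `θ`. -/
def ringRel (T : TopTriangulation n d) (θ : Fin d → MvPolynomial (Fin n) K) :
    Ideal (MvPolynomial (Fin n) K) :=
  faceIdeal K T + Ideal.span (Set.range θ)

/-- The quotient `A_θ(Γ) = K[Γ]/(θ_1, …, θ_d)`. -/
abbrev FaceQuot (T : TopTriangulation n d) (θ : Fin d → MvPolynomial (Fin n) K) : Type :=
  MvPolynomial (Fin n) K ⧸ ringRel K T θ

/-- The quotient map onto `A_θ(Γ)`. -/
def proj (T : TopTriangulation n d) (θ : Fin d → MvPolynomial (Fin n) K) :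
    MvPolynomial (Fin n) K →+* FaceQuot K T θ :=
  Ideal.Quotient.mk (ringRel K T θ)

/-- `θ` is a linear system of parameters: the quotient is a finite-dimensional
vector space. -/
def IsLsop (T : TopTriangulation n d) (θ : Fin d → MvPolynomial (Fin n) K) : Prop :=
  FiniteDimensional K (FaceQuot K T θ)

/-- The total degree of an exponent vector. -/
def degSum {n : ℕ} (e : Fin n →₀ ℕ) : ℕ := e.sum fun _ v => v

/-- The degree `s` part of the local face module `L_θ(Γ)`: the span of the
classes of degree `s` monomials whose underlying face is interior. -/
def Lpart (T : TopTriangulation n d) (θ : Fin d → MvPolynomial (Fin n) K) (s : ℕ) :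
    Submodule K (FaceQuot K T θ) :=
  Submodule.span K {u | ∃ e : Fin n →₀ ℕ,
    degSum e = s ∧ T.InteriorFace e.support ∧ u = proj K T θ (monomial e 1)}

/-- The local face module `L_θ(Γ)`: the image in `A_θ(Γ)` of the ideal of
interior faces. -/
def LIdeal (T : TopTriangulation n d) (θ : Fin d → MvPolynomial (Fin n) K) :
    Ideal (FaceQuot K T θ) :=
  Ideal.span {u | ∃ G : Finset (Fin n), T.InteriorFace G ∧ u = proj K T θ (faceMonomial K G)}

/-- The class of `ℓ = x_1 + ⋯ + x_n`. -/
def ellC (T : TopTriangulation n d) (θ : Fin d → MvPolynomial (Fin n) K) : FaceQuot K T θ :=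
  proj K T θ (∑ j : Fin n, X j)

/-! ### the generic special l.s.o.p. -/

/-- The index type of the variables `a_{i,j}`, `i ∈ σ({j})`. -/
def GenIdx (T : TopTriangulation n d) : Type := {p : Fin d × Fin n // p.1 ∈ T.σ {p.2}}

/-- The field `K = k(a_{i,j} : 1 ≤ j ≤ n, i ∈ σ({j}))`. -/
abbrev GenField (k : Type) [Field k] (T : TopTriangulation n d) : Type :=
  FractionRing (MvPolynomial (GenIdx T) k)

/-- The element `a_{i,j}` of `K`. -/
def genVar (k : Type) [Field k] (T : TopTriangulation n d) (w : GenIdx T) : GenField k T :=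
  algebraMap (MvPolynomial (GenIdx T) k) (GenField k T) (X w)

/-- The generic special l.s.o.p. `θ_i = ∑_{j : i ∈ σ(j)} a_{i,j} x_j`. -/
def thetaGen (k : Type) [Field k] (T : TopTriangulation n d) (i : Fin d) :
    MvPolynomial (Fin n) (GenField k T) :=
  ∑ j : Fin n, if h : i ∈ T.σ {j} then C (genVar k T ⟨(i, j), h⟩) * X j else 0

/-! ## The cone sphere `Γ̂` and its artinian Gorenstein quotient -/

/-- The faces of the sphere `Γ̂`, obtained from `Γ` by adding a cone vertex `c`
(the last element of `Fin (n+1)`) over the boundary of `Γ`. -/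
def hatFaces (T : TopTriangulation n d) : Set (Finset (Fin (n + 1))) :=
  {F | ∃ G ∈ T.faces, F = G.image Fin.castSucc ∨
        (T.σ G ≠ Finset.univ ∧ F = insert (Fin.last n) (G.image Fin.castSucc))}

/-- The Stanley–Reisner ideal of `Γ̂`. -/
def hatFaceIdeal (T : TopTriangulation n d) : Ideal (MvPolynomial (Fin (n + 1)) K) :=
  Ideal.span {p | ∃ F : Finset (Fin (n + 1)), F ∉ hatFaces T ∧ p = ∏ v ∈ F, X v}

/-- The l.s.o.p. `θ̂_i = θ_i - x_c` for `K[Γ̂]`. -/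
def thetaHat (θ : Fin d → MvPolynomial (Fin n) K) (i : Fin d) :
    MvPolynomial (Fin (n + 1)) K :=
  rename Fin.castSucc (θ i) - X (Fin.last n)

def hatRel (T : TopTriangulation n d) (θ : Fin d → MvPolynomial (Fin n) K) :
    Ideal (MvPolynomial (Fin (n + 1)) K) :=
  hatFaceIdeal K T + Ideal.span (Set.range (thetaHat K θ))

/-- The artinian Gorenstein algebra `A_θ̂(Γ̂) = K[Γ̂]/(θ̂_1, …, θ̂_d)`. -/
abbrev HatQuot (T : TopTriangulation n d) (θ : Fin d → MvPolynomial (Fin n) K) : Type :=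
  MvPolynomial (Fin (n + 1)) K ⧸ hatRel K T θ

def projHat (T : TopTriangulation n d) (θ : Fin d → MvPolynomial (Fin n) K) :
    MvPolynomial (Fin (n + 1)) K →+* HatQuot K T θ :=
  Ideal.Quotient.mk (hatRel K T θ)

/-- The class of the cone variable `x_c`. -/
def xc (T : TopTriangulation n d) (θ : Fin d → MvPolynomial (Fin n) K) : HatQuot K T θ :=
  projHat K T θ (X (Fin.last n))

/-- The ideal `(x_c)` of `A_θ̂(Γ̂)`, as a `K`-submodule. -/
def IcSub (T : TopTriangulation n d) (θ : Fin d → MvPolynomial (Fin n) K) :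
    Submodule K (HatQuot K T θ) :=
  Submodule.restrictScalars K (Ideal.span {xc K T θ})

/-- The annihilator of `x_c` in `A_θ̂(Γ̂)`, as a `K`-submodule. -/
def annXc (T : TopTriangulation n d) (θ : Fin d → MvPolynomial (Fin n) K) :
    Submodule K (HatQuot K T θ) :=
  LinearMap.ker (LinearMap.mulLeft K (xc K T θ))

/-- The span in `A_θ̂(Γ̂)` of the classes of the degree `s` monomials (in the
variables of `Γ`) with interior underlying face; this maps isomorphically onto the
degree `s` part of the local face module under `A_θ̂(Γ̂)/(x_c) ≅ A_θ(Γ)`. -/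
def LhatPart (T : TopTriangulation n d) (θ : Fin d → MvPolynomial (Fin n) K) (s : ℕ) :
    Submodule K (HatQuot K T θ) :=
  Submodule.span K {u | ∃ e : Fin n →₀ ℕ, degSum e = s ∧ T.InteriorFace e.support ∧
    u = projHat K T θ (monomial (e.mapDomain Fin.castSucc) 1)}

/-- The class of `ℓ = x_1 + ⋯ + x_n` in `A_θ̂(Γ̂)`. -/
def ellHat (T : TopTriangulation n d) (θ : Fin d → MvPolynomial (Fin n) K) : HatQuot K T θ :=
  projHat K T θ (∑ j : Fin n, X (Fin.castSucc j))


/-! ## Geometric and regular triangulations -/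

/-- The data of a geometric realization of a triangulation `σ : Γ → 2^V` of the
standard `(d-1)`-simplex: vertices of `Γ` are realized as points of the standard
simplex, cells are simplices meeting along common faces and covering the simplex,
and `σ` sends a face to the smallest face of the simplex containing it. -/
structure GeomData {n d : ℕ} (T : TopTriangulation n d) where
  p : Fin n → EuclideanSpace ℝ (Fin d)
  mem_simplex : ∀ j : Fin n, (∀ i, 0 ≤ p j i) ∧ (∑ i, p j i) = 1
  indep : ∀ F ∈ T.faces, AffineIndependent ℝ (fun j : ↥F => p ↑j)
  sigma_eq : ∀ F ∈ T.faces,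
    T.σ F = Finset.univ.filter (fun i : Fin d => ∃ j ∈ F, p j i ≠ 0)
  cover : (⋃ F ∈ T.faces, convexHull ℝ (p '' ↑F)) =
    {x : EuclideanSpace ℝ (Fin d) | (∀ i, 0 ≤ x i) ∧ (∑ i, x i) = 1}
  inter : ∀ F ∈ T.faces, ∀ G ∈ T.faces,
    convexHull ℝ (p '' ↑F) ∩ convexHull ℝ (p '' ↑G) = convexHull ℝ (p '' ↑(F ∩ G))

/-- A triangulation is regular if it admits a geometric realization which is the
projection of the lower faces of the convex hull of the vertices lifted by a
height function: every facet is cut out by an affine functional agreeing with the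
heights on the facet and lying strictly below the heights elsewhere. -/
def TopTriangulation.Regular {n d : ℕ} (T : TopTriangulation n d) : Prop :=
  ∃ D : GeomData T, ∃ ht : Fin n → ℝ,
    ∀ F ∈ T.faces, F.card = d →
      ∃ (w : Fin d → ℝ) (c₀ : ℝ),
        (∀ j ∈ F, (∑ i, w i * D.p j i) + c₀ = ht j) ∧
        (∀ j ∉ F, (∑ i, w i * D.p j i) + c₀ < ht j)

/-! ## The ring `k[x_1,…,x_t]/(x_1^3,…,x_t^3)` -/

/-- The ring `R = k[x_1,…,x_t]/(x_1^3, …, x_t^3)`. -/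
abbrev CubeQuot (k : Type) [Field k] (t : ℕ) : Type :=
  MvPolynomial (Fin t) k ⧸
    Ideal.span {p : MvPolynomial (Fin t) k | ∃ s : Fin t, p = X s ^ 3}

/-- The quotient map onto `R`. -/
def cproj (k : Type) [Field k] (t : ℕ) : MvPolynomial (Fin t) k →+* CubeQuot k t :=
  Ideal.Quotient.mk _

/-- The element `y = ∑ a_s x_s` of `R`. -/
def yEl (k : Type) [Field k] (t : ℕ) (a : Fin t → k) : CubeQuot k t :=
  cproj k t (∑ s : Fin t, C (a s) * X s)

/-- The element `z_m = ∑ a_1^{l_1 - 1} ⋯ a_t^{l_t - 1} x_1^{l_1} ⋯ x_t^{l_t}` of `R`,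
the sum over all `(l_1, …, l_t)` with `l_s ∈ {1, 2}` and `∑ l_s = m`.
(For `m > 2t` this is the empty sum, i.e. `0`.) -/
def zEl (k : Type) [Field k] (t : ℕ) (a : Fin t → k) (m : ℕ) : CubeQuot k t :=
  ∑ l ∈ Finset.univ.filter (fun l : Fin t → Fin 2 => t + ∑ s, (l s : ℕ) = m),
    cproj k t (∏ s : Fin t, (C (a s) ^ (l s : ℕ) * X s ^ ((l s : ℕ) + 1)))


/-! ### Auxiliary lemmas for Statement 9 -/

section Aux9

variable {K : Type} [Field K] {n d : ℕ}

lemma prod_X_eq_monomial' (F : Finset (Fin n)) :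
    (∏ j ∈ F, (X j : MvPolynomial (Fin n) K)) =
      monomial (∑ j ∈ F, Finsupp.single j 1) 1 := by
  classical
  induction F using Finset.induction with
  | empty => simp [monomial_zero']
  | insert _ _ h ih =>
      rw [Finset.prod_insert h, ih, Finset.sum_insert h]
      show monomial (Finsupp.single _ 1) (1 : K) * _ = _
      rw [monomial_mul, one_mul]

lemma chi_apply (F : Finset (Fin n)) (a : Fin n) :
    (∑ j ∈ F, Finsupp.single j (1 : ℕ)) a = if a ∈ F then 1 else 0 := by
  classical
  rw [Finsupp.finset_sum_apply]
  simp [Finsupp.single_apply]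

lemma support_chi (F : Finset (Fin n)) :
    (∑ j ∈ F, Finsupp.single j (1 : ℕ)).support = F := by
  classical
  ext a
  rw [Finsupp.mem_support_iff, chi_apply]
  by_cases h : a ∈ F <;> simp [h]

lemma chi_le (e : Fin n →₀ ℕ) : (∑ j ∈ e.support, Finsupp.single j (1 : ℕ)) ≤ e := by
  classical
  rw [Finsupp.le_def]
  intro a
  rw [chi_apply]
  by_cases h : a ∈ e.support
  · rw [if_pos h]
    exact Nat.one_le_iff_ne_zero.mpr (Finsupp.mem_support_iff.mp h)
  · rw [if_neg h]; exact Nat.zero_le _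

lemma monomial_eq_mul_face (e : Fin n →₀ ℕ) :
    (monomial e (1 : K) : MvPolynomial (Fin n) K) =
      monomial (e - ∑ j ∈ e.support, Finsupp.single j 1) 1 * faceMonomial K e.support := by
  rw [faceMonomial, prod_X_eq_monomial', monomial_mul, one_mul,
    tsub_add_cancel_of_le (chi_le e)]

lemma proj_monomial_eq_zero (T : TopTriangulation n d)
    (θ : Fin d → MvPolynomial (Fin n) K)
    {e : Fin n →₀ ℕ} (h : e.support ∉ T.faces) :
    proj K T θ (monomial e 1) = 0 := by
  show Ideal.Quotient.mk _ _ = 0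
  rw [Ideal.Quotient.eq_zero_iff_mem, monomial_eq_mul_face, ringRel, Ideal.add_eq_sup]
  exact Ideal.mem_sup_left (Ideal.mul_mem_left _ _
    (Ideal.subset_span ⟨e.support, h, rfl⟩))

lemma proj_theta (T : TopTriangulation n d) (θ : Fin d → MvPolynomial (Fin n) K)
    (i : Fin d) : proj K T θ (θ i) = 0 := by
  show Ideal.Quotient.mk _ _ = 0
  rw [Ideal.Quotient.eq_zero_iff_mem, ringRel, Ideal.add_eq_sup]
  exact Ideal.mem_sup_right (Ideal.subset_span ⟨i, rfl⟩)

lemma proj_C_mul (T : TopTriangulation n d) (θ : Fin d → MvPolynomial (Fin n) K)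
    (a : K) (q : MvPolynomial (Fin n) K) :
    proj K T θ (C a * q) = a • proj K T θ q := by
  rw [← smul_eq_C_mul]
  show Ideal.Quotient.mkₐ K (ringRel K T θ) (a • q) = a • Ideal.Quotient.mkₐ K _ q
  exact map_smul _ a q

/-- The coefficient of `x_j` in `θ i`. -/
def ci (θ : Fin d → MvPolynomial (Fin n) K) (i : Fin d) (j : Fin n) : K :=
  coeff (Finsupp.single j 1) (θ i)

lemma theta_eq (T : TopTriangulation n d) {θ : Fin d → MvPolynomial (Fin n) K}
    (hspec : IsSpecial K T θ) (i : Fin d) :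
    θ i = ∑ j : Fin n, C (ci θ i j) * X j := by
  classical
  apply MvPolynomial.ext
  intro e
  rw [coeff_sum]
  simp only [coeff_C_mul, coeff_X']
  by_cases he : ∃ j0 : Fin n, e = Finsupp.single j0 1
  · obtain ⟨j0, rfl⟩ := he
    have : ∀ j : Fin n,
        (ci θ i j * if (Finsupp.single j 1 : Fin n →₀ ℕ) = Finsupp.single j0 1 then 1 else 0)
          = if j0 = j then ci θ i j0 else 0 := by
      intro j
      by_cases hj : j = j0
      · subst hj; simp
      · rw [if_neg (fun h => hj ((Finsupp.single_left_inj one_ne_zero).mp h)),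
          if_neg (fun h => hj h.symm), mul_zero]
    rw [Finset.sum_congr rfl (fun j _ => this j), Finset.sum_ite_eq]
    simp [ci]
  · have h0 : coeff e (θ i) = 0 := by
      by_contra h
      obtain ⟨j, _, hj⟩ := hspec i e (MvPolynomial.mem_support_iff.mpr h)
      exact he ⟨j, hj⟩
    rw [h0]
    refine (Finset.sum_eq_zero fun j _ => ?_).symm
    rw [if_neg fun h => he ⟨j, h.symm⟩, mul_zero]

lemma ci_eq_zero (T : TopTriangulation n d) {θ : Fin d → MvPolynomial (Fin n) K}
    (hspec : IsSpecial K T θ) {i : Fin d} {j : Fin n} (h : i ∉ T.σ {j}) :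
    ci θ i j = 0 := by
  by_contra hc
  obtain ⟨j', hi', heq⟩ := hspec i (Finsupp.single j 1)
    (MvPolynomial.mem_support_iff.mpr hc)
  rw [(Finsupp.single_left_inj one_ne_zero).mp heq] at h
  exact h hi'

lemma mem_sigma_of_ci_ne_zero (T : TopTriangulation n d)
    {θ : Fin d → MvPolynomial (Fin n) K} (hspec : IsSpecial K T θ)
    {i : Fin d} {j : Fin n} (h : ci θ i j ≠ 0) : i ∈ T.σ {j} := by
  by_contra hc
  exact h (ci_eq_zero T hspec hc)

lemma stdPt_mem_realization (T : TopTriangulation n d) {U : Finset (Fin d)} {j : Fin n}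
    (h : T.σ {j} ⊆ U) :
    stdPt n j ∈ realization {F | F ∈ T.faces ∧ T.σ F ⊆ U} := by
  refine Set.mem_biUnion (show ({j} : Finset (Fin n)) ∈ _ from ⟨T.vertex_mem j, h⟩) ?_
  exact subset_convexHull ℝ _ ⟨j, by simp, rfl⟩

/-- For each `i`, there is at most one vertex `j` with `σ {j} ⊆ {i}`. -/
lemma vertex_unique (T : TopTriangulation n d) {i : Fin d} {j j' : Fin n}
    (h : T.σ {j} ⊆ {i}) (h' : T.σ {j'} ⊆ {i}) : j = j' := by
  have hb := T.ball {i} (Finset.singleton_nonempty i)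
  rw [IsBall, Finset.card_singleton] at hb
  obtain ⟨f⟩ := hb
  haveI hsub0 : Subsingleton (EuclideanSpace ℝ (Fin (1 - 1))) :=
    (inferInstance : Subsingleton (EuclideanSpace ℝ (Fin 0)))
  haveI hsub : Subsingleton
      ↥(Metric.closedBall (0 : EuclideanSpace ℝ (Fin (1 - 1))) 1) :=
    ⟨fun a b => Subtype.ext (Subsingleton.elim _ _)⟩
  have hX : Subsingleton ↥(realization {F | F ∈ T.faces ∧ T.σ F ⊆ ({i} : Finset (Fin d))}) :=
    f.toEquiv.subsingleton
  have heq : stdPt n j = stdPt n j' := by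
    have := @Subsingleton.elim _ hX ⟨stdPt n j, stdPt_mem_realization T h⟩
      ⟨stdPt n j', stdPt_mem_realization T h'⟩
    exact congrArg Subtype.val this
  by_contra hne
  have hcf : stdPt n j j = stdPt n j' j :=
    congrArg (fun v : EuclideanSpace ℝ (Fin n) => v j) heq
  have h1 : stdPt n j j = 1 := by simp [stdPt, EuclideanSpace.single_apply]
  have h2 : stdPt n j' j = 0 := by simp [stdPt, EuclideanSpace.single_apply, hne]
  rw [h1, h2] at hcf
  exact one_ne_zero hcf

lemma sigma_vertex_nonempty (T : TopTriangulation n d) (j : Fin n) :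
    (T.σ {j}).Nonempty := by
  rw [Finset.nonempty_iff_ne_empty]
  intro h
  exact Finset.singleton_ne_empty j ((T.sigma_empty_iff {j} (T.vertex_mem j)).mp h)

/-- Nonvanishing of the diagonal coefficient for an excess-zero vertex. -/
lemma ci_ne_zero (T : TopTriangulation n d) {θ : Fin d → MvPolynomial (Fin n) K}
    (hspec : IsSpecial K T θ) (hlsop : IsLsop K T θ) {i : Fin d} {j : Fin n}
    (hij : T.σ {j} = {i}) : ci θ i j ≠ 0 := by
  classical
  intro hc
  set g : Fin n → Polynomial K := fun j'' => if j'' = j then Polynomial.X else 0 with hg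
  set φ : MvPolynomial (Fin n) K →ₐ[K] Polynomial K := aeval g with hφ
  have hker : ∀ p ∈ ringRel K T θ, φ p = 0 := by
    intro p hp
    refine (show ringRel K T θ ≤ RingHom.ker φ.toRingHom from ?_) hp
    rw [ringRel, Ideal.add_eq_sup]
    apply sup_le
    · rw [faceIdeal, Ideal.span_le]
      rintro q ⟨F, hF, rfl⟩
      have hvex : ∃ v ∈ F, v ≠ j := by
        by_contra hall
        push_neg at hall
        have : F ⊆ {j} := fun v hv => Finset.mem_singleton.mpr (hall v hv)
        rcases Finset.subset_singleton_iff.mp this with rfl | rfl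
        · exact hF T.empty_mem
        · exact hF (T.vertex_mem j)
      obtain ⟨v, hv, hvj⟩ := hvex
      show φ _ = 0
      rw [faceMonomial, map_prod]
      refine Finset.prod_eq_zero hv ?_
      simp [hφ, hg, if_neg hvj]
    · rw [Ideal.span_le]
      rintro q ⟨i', rfl⟩
      show φ (θ i') = 0
      rw [theta_eq T hspec i', map_sum]
      refine Finset.sum_eq_zero fun j'' _ => ?_
      rw [map_mul, aeval_C, aeval_X]
      by_cases hj : j'' = j
      · subst hj
        have h0 : ci θ i' j'' = 0 := by
          by_cases hii : i' = i
          · subst hii; exact hc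
          · refine ci_eq_zero T hspec ?_
            rw [hij, Finset.mem_singleton]; exact hii
        rw [h0, map_zero, zero_mul]
      · rw [hg]; simp [if_neg hj]
  set ψ := Ideal.Quotient.liftₐ (ringRel K T θ) φ hker with hψ
  have hφsurj : Function.Surjective φ := by
    rw [← AlgHom.range_eq_top, eq_top_iff, ← Polynomial.adjoin_X]
    refine Algebra.adjoin_le ?_
    rintro x hx
    rw [Set.mem_singleton_iff] at hx
    subst hx
    exact ⟨X j, by simp [hφ, hg]⟩
  have hψsurj : Function.Surjective ψ := by
    intro q
    obtain ⟨p, rfl⟩ := hφsurj q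
    exact ⟨Ideal.Quotient.mk _ p, by simp [hψ]; rfl⟩
  have : FiniteDimensional K (FaceQuot K T θ) := hlsop
  have : Module.Finite K (Polynomial K) :=
    Module.Finite.of_surjective ψ.toLinearMap hψsurj
  exact Polynomial.not_finite this

/-- Weight: total exponent on excess-zero vertices. -/
def wt (T : TopTriangulation n d) (e : Fin n →₀ ℕ) : ℕ :=
  ∑ a : Fin n, if (T.σ {a}).card = 1 then e a else 0

end Aux9

/-- Let `σ : Γ → 2^V` be a vertex-induced triangulation of a
`(d-1)`-dimensional simplex and `θ` a special l.s.o.p. for `K[Γ]`.  Then the local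
face module `L_θ(Γ)` is spanned as a `K`-vector space by the classes of the
monomials whose underlying face is interior and contains no vertex of excess `0`
(i.e. no vertex `j` with `|σ({j})| = 1`). -/
theorem localFaceModule_spanned_by_no_excess_zero (K : Type) [Field K] {n d : ℕ}
    (T : TopTriangulation n d) (hvi : T.VertexInduced)
    (θ : Fin d → MvPolynomial (Fin n) K) (hspec : IsSpecial K T θ)
    (hlsop : IsLsop K T θ) :
    Submodule.restrictScalars K (LIdeal K T θ) =
      Submodule.span K {u | ∃ e : Fin n →₀ ℕ, T.InteriorFace e.support ∧
        (∀ j ∈ e.support, (T.σ {j}).card ≠ 1) ∧ u = proj K T θ (monomial e 1)} := by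
  classical
  set M := Submodule.span K {u | ∃ e : Fin n →₀ ℕ, T.InteriorFace e.support ∧
      (∀ j ∈ e.support, (T.σ {j}).card ≠ 1) ∧ u = proj K T θ (monomial e 1)} with hM
  -- Key claim: the class of every monomial with interior support lies in `M`.
  have key : ∀ m : ℕ, ∀ e : Fin n →₀ ℕ, wt T e ≤ m → T.InteriorFace e.support →
      proj K T θ (monomial e 1) ∈ M := by
    intro m
    induction m with
    | zero =>
      intro e hw hint
      refine Submodule.subset_span ⟨e, hint, ?_, rfl⟩
      intro j hj h1
      have h2 := Finset.single_le_sum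
        (f := fun a => if (T.σ {a}).card = 1 then e a else 0)
        (fun a _ => Nat.zero_le _) (Finset.mem_univ j)
      simp only [if_pos h1] at h2
      rw [wt] at hw
      have h3 : 0 < e j := Nat.pos_of_ne_zero (Finsupp.mem_support_iff.mp hj)
      have h4 := le_trans h2 hw
      omega
    | succ m ih =>
      intro e hw hint
      by_cases hex : ∀ j ∈ e.support, (T.σ {j}).card ≠ 1
      · exact Submodule.subset_span ⟨e, hint, hex, rfl⟩
      push_neg at hex
      obtain ⟨j, hjs, hj1⟩ := hex
      obtain ⟨i, hi⟩ := Finset.card_eq_one.mp hj1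
      have hcne : ci θ i j ≠ 0 := ci_ne_zero T hspec hlsop hi
      have hje : 1 ≤ e j := Nat.one_le_iff_ne_zero.mpr (Finsupp.mem_support_iff.mp hjs)
      have hle : (Finsupp.single j 1 : Fin n →₀ ℕ) ≤ e := Finsupp.single_le_iff.mpr hje
      set e₀ : Fin n →₀ ℕ := e - Finsupp.single j 1 with he₀
      have hmul : ∀ (a : K) (j' : Fin n),
          monomial e₀ (1:K) * (C a * X j')
            = C a * monomial (e₀ + Finsupp.single j' 1) 1 := by
        intro a j'
        show monomial e₀ (1:K) * (C a * monomial (Finsupp.single j' 1) 1) = _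
        rw [C_mul_monomial, mul_one, monomial_mul, C_mul_monomial, one_mul, mul_one]
      have key_poly : monomial e₀ (1:K) * θ i
          = C (ci θ i j) * monomial e 1
            + ∑ j' ∈ Finset.univ.erase j,
                C (ci θ i j') * monomial (e₀ + Finsupp.single j' 1) 1 := by
        rw [theta_eq T hspec i, Finset.mul_sum,
          ← Finset.add_sum_erase _ _ (Finset.mem_univ j)]
        congr 1
        · rw [hmul, he₀, tsub_add_cancel_of_le hle]
        · exact Finset.sum_congr rfl fun j' _ => hmul _ j'
      have hproj := congrArg (proj K T θ) key_poly
      rw [map_mul, proj_theta, mul_zero, map_add, map_sum] at hproj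
      simp only [proj_C_mul] at hproj
      have heq2 : ci θ i j • proj K T θ (monomial e 1)
          = -∑ j' ∈ Finset.univ.erase j,
              ci θ i j' • proj K T θ (monomial (e₀ + Finsupp.single j' 1) 1) :=
        eq_neg_of_add_eq_zero_left hproj.symm
      have hP : proj K T θ (monomial e 1)
          = (ci θ i j)⁻¹ • (ci θ i j • proj K T θ (monomial e 1)) := by
        rw [smul_smul, inv_mul_cancel₀ hcne, one_smul]
      rw [hP, heq2]
      apply M.smul_mem
      apply neg_mem
      apply Submodule.sum_mem
      intro j' hj'
      by_cases hz : ci θ i j' = 0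
      · rw [hz, zero_smul]; exact zero_mem _
      apply M.smul_mem
      set e' : Fin n →₀ ℕ := e₀ + Finsupp.single j' 1 with he'
      by_cases hface : e'.support ∈ T.faces
      swap
      · rw [proj_monomial_eq_zero T θ hface]; exact zero_mem _
      have hjj' : j' ≠ j := Finset.ne_of_mem_erase hj'
      have hij' : i ∈ T.σ {j'} := mem_sigma_of_ci_ne_zero T hspec hz
      have happ : ∀ u, e' u
          = (e u - (if j = u then 1 else 0)) + (if j' = u then 1 else 0) := by
        intro u
        rw [he', Finsupp.add_apply, he₀, Finsupp.tsub_apply,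
          Finsupp.single_apply, Finsupp.single_apply]
      have hmemsub : ∀ u ∈ e.support, u ≠ j → u ∈ e'.support := by
        intro u hu huj
        rw [Finsupp.mem_support_iff]
        have h5 := happ u
        rw [if_neg (fun h => huj h.symm)] at h5
        have hu' : e u ≠ 0 := Finsupp.mem_support_iff.mp hu
        omega
      have hj'mem : j' ∈ e'.support := by
        rw [Finsupp.mem_support_iff]
        have h5 := happ j'
        rw [if_pos rfl] at h5
        omega
      have hj'card : (T.σ {j'}).card ≠ 1 := by
        intro h1
        obtain ⟨b, hb⟩ := Finset.card_eq_one.mp h1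
        have hbi : T.σ {j'} ⊆ {i} := by
          have : i ∈ ({b} : Finset (Fin d)) := hb ▸ hij'
          rw [hb, Finset.mem_singleton.mp this]
        exact hjj' (vertex_unique T hbi (by simp [hi]))
      have hσ : T.σ e'.support = Finset.univ := by
        by_contra hne
        refine hvi ⟨e.support, hint.1, T.σ e'.support, ?_, ?_⟩
        · rw [hint.2]
          exact Finset.ssubset_univ_iff.mpr hne
        · intro u hu
          by_cases huj : u = j
          · subst huj
            rw [hi]
            exact Finset.singleton_subset_iff.mpr
              (T.mono (T.vertex_mem j') hface
                (Finset.singleton_subset_iff.mpr hj'mem) hij')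
          · exact T.mono (T.vertex_mem u) hface
              (Finset.singleton_subset_iff.mpr (hmemsub u hu huj))
      have hwt : wt T e' + 1 = wt T e := by
        rw [wt, wt, ← Finset.add_sum_erase _ _ (Finset.mem_univ j),
          ← Finset.add_sum_erase _ _ (Finset.mem_univ j)]
        have hterm : ∀ u ∈ Finset.univ.erase j,
            (if (T.σ {u}).card = 1 then e' u else 0)
              = (if (T.σ {u}).card = 1 then e u else 0) := by
          intro u hu
          by_cases h1 : (T.σ {u}).card = 1
          · rw [if_pos h1, if_pos h1]
            have huj : u ≠ j := Finset.ne_of_mem_erase hu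
            have huj' : u ≠ j' := fun h => hj'card (h ▸ h1)
            have h5 := happ u
            rw [if_neg (fun h => huj h.symm), if_neg (fun h => huj' h.symm)] at h5
            omega
          · rw [if_neg h1, if_neg h1]
        rw [Finset.sum_congr rfl hterm, if_pos hj1, if_pos hj1]
        have h5 := happ j
        rw [if_pos rfl, if_neg hjj'] at h5
        omega
      exact ih e' (by omega) ⟨hface, hσ⟩
  -- The two inclusions.
  apply le_antisymm
  · -- closure of `M` under multiplication by the ambient ring
    have hmulM : ∀ p : MvPolynomial (Fin n) K, ∀ v ∈ M, proj K T θ p * v ∈ M := by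
      have hgen : ∀ (p : MvPolynomial (Fin n) K) (e : Fin n →₀ ℕ),
          T.InteriorFace e.support →
          proj K T θ p * proj K T θ (monomial e 1) ∈ M := by
        intro p e he
        nth_rewrite 1 [p.as_sum]
        rw [map_sum, Finset.sum_mul]
        apply Submodule.sum_mem
        intro v _
        have h1 : (monomial v) (coeff v p) = C (coeff v p) * monomial v 1 := by
          rw [C_mul_monomial, mul_one]
        rw [h1, proj_C_mul, smul_mul_assoc, ← map_mul, monomial_mul, one_mul]
        by_cases hface : (v + e).support ∈ T.faces
        · apply M.smul_mem
          apply key (wt T (v + e)) _ le_rfl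
          refine ⟨hface, ?_⟩
          have hsub : e.support ⊆ (v + e).support := by
            intro u hu
            rw [Finsupp.mem_support_iff] at hu ⊢
            rw [Finsupp.add_apply]
            omega
          have h2 := T.mono he.1 hface hsub
          rw [he.2] at h2
          exact Finset.univ_subset_iff.mp h2
        · rw [proj_monomial_eq_zero T θ hface, smul_zero]; exact zero_mem _
      intro p v hv
      refine Submodule.span_induction (p := fun x _ => proj K T θ p * x ∈ M)
        ?_ ?_ ?_ ?_ hv
      · rintro x ⟨e, he, -, rfl⟩; exact hgen p e he
      · show proj K T θ p * 0 ∈ M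
        rw [mul_zero]; exact zero_mem _
      · intro x y _ _ hx hy
        show proj K T θ p * (x + y) ∈ M
        rw [mul_add]; exact add_mem hx hy
      · intro c x _ hx
        show proj K T θ p * (c • x) ∈ M
        rw [mul_smul_comm]; exact M.smul_mem c hx
    intro u hu
    rw [Submodule.restrictScalars_mem, LIdeal] at hu
    refine Submodule.span_induction (p := fun x _ => x ∈ M) ?_ ?_ ?_ ?_ hu
    · rintro x ⟨G, hG, rfl⟩
      show proj K T θ (faceMonomial K G) ∈ M
      rw [faceMonomial, prod_X_eq_monomial']
      apply key (wt T _) _ le_rfl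
      rw [support_chi]
      exact hG
    · exact zero_mem _
    · intro x y _ _ hx hy; exact add_mem hx hy
    · intro a x _ hx
      show a • x ∈ M
      obtain ⟨p, rfl⟩ := Ideal.Quotient.mk_surjective a
      rw [smul_eq_mul]
      exact hmulM p x hx
  · rw [Submodule.span_le]
    rintro x ⟨e, he, -, rfl⟩
    rw [SetLike.mem_coe, Submodule.restrictScalars_mem, monomial_eq_mul_face, map_mul]
    exact Ideal.mul_mem_left _ _ (Ideal.subset_span ⟨e.support, he, rfl⟩)

end LocalFace
end
end

section
/- Let k be a field of characteristic p > 0, let t ≥ 2p−1, and let R = k[x_1,…,x_t]/(x_1^3,…,x_t^3). Fix a_1,…,a_t ∈ k, all nonzero, set y = Σ_s a_s x_s and m = t + p − 1, and let z_m = Σ (Π_s a_s^{l_s−1}) x_1^{l_1}⋯x_t^{l_t}, the sum over all (l_1,…,l_t) with l_s ∈ {1,2} and Σ_s l_s = m. Then z_m ≠ 0 and y·z_m = 0 in R. Since t ≤ m < ⌈3t/2⌉, multiplication by y fails to be injective on a graded piece of the span of {x_1^{l_1}⋯x_t^{l_t} : l_s ∈ {1,2}} strictly below the middle degree 3t/2,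 so the weak Lefschetz property fails for the local face module L_θ(Γ_t) when 2p − 1 ≤ t. -/
open Finset MvPolynomial

set_option synthInstance.maxHeartbeats 1000000
set_option maxHeartbeats 4000000

noncomputable section

namespace LocalFace

/-! ## Face rings and local face modules -/

variable (K : Type) [Field K] {n d : ℕ}

section Aux

variable {k : Type} [Field k] {t : ℕ}

/-- The monomial-with-coefficient term indexed by `l : Fin t → Fin 2`. -/
private def Tm (a : Fin t → k) (l : Fin t → Fin 2) : MvPolynomial (Fin t) k :=
  ∏ s : Fin t, (C (a s) ^ (l s : ℕ) * X s ^ ((l s : ℕ) + 1))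

private def expv (t : ℕ) (l : Fin t → Fin 2) : Fin t →₀ ℕ :=
  Finsupp.equivFunOnFinite.symm (fun s => (l s : ℕ) + 1)

private lemma expv_apply (l : Fin t → Fin 2) (s : Fin t) : expv t l s = (l s : ℕ) + 1 := rfl

private lemma expv_injective : Function.Injective (expv t) := by
  intro l l' h
  funext s
  have := congrArg (fun f => (f : (Fin t →₀ ℕ)) s) h
  simp only [expv_apply] at this
  exact Fin.val_injective (by omega)

private lemma Tm_eq (a : Fin t → k) (l : Fin t → Fin 2) :
    Tm a l = monomial (expv t l) (∏ s : Fin t, a s ^ (l s : ℕ)) := by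
  rw [monomial_eq, Finsupp.prod_fintype _ _ (fun i => pow_zero _)]
  rw [Tm, Finset.prod_mul_distrib, map_prod]
  simp only [map_pow, expv_apply]

private lemma fin2_cast (x : Fin 2) : (x : ℕ) = if x = 1 then 1 else 0 := by
  fin_cases x <;> rfl

private lemma fin2_eq_zero {x : Fin 2} (h : ¬ x = 1) : x = 0 := by
  fin_cases x <;> simp_all

/-- Sum over an update. -/
private lemma sum_update (l : Fin t → Fin 2) (s : Fin t) (v : Fin 2) :
    ∑ s' : Fin t, ((Function.update l s v) s' : ℕ)
      = (v : ℕ) + ∑ s' ∈ Finset.univ.erase s, (l s' : ℕ) := by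
  rw [← Finset.add_sum_erase _ _ (Finset.mem_univ s), Function.update_self]
  congr 1
  exact Finset.sum_congr rfl fun s' hs' => by
    rw [Function.update_of_ne (Finset.ne_of_mem_erase hs')]

private lemma sum_split (l : Fin t → Fin 2) (s : Fin t) :
    ∑ s' : Fin t, (l s' : ℕ) = (l s : ℕ) + ∑ s' ∈ Finset.univ.erase s, (l s' : ℕ) :=
  (Finset.add_sum_erase _ _ (Finset.mem_univ s)).symm

/-- coefficients below degree 3 vanish on the cube ideal -/
private lemma coeff_vanish {f : MvPolynomial (Fin t) k}
    (hf : f ∈ Ideal.span {p : MvPolynomial (Fin t) k | ∃ s : Fin t, p = X s ^ 3})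
    (E : Fin t →₀ ℕ) (hE : ∀ s, E s ≤ 2) : coeff E f = 0 := by
  refine Submodule.span_induction (p := fun f _ => ∀ E : Fin t →₀ ℕ, (∀ s, E s ≤ 2) → coeff E f = 0)
    ?_ ?_ ?_ ?_ hf E hE
  · rintro x ⟨s, rfl⟩ E hE
    rw [X_pow_eq_monomial, coeff_monomial, if_neg]
    intro h
    have := hE s
    rw [← h] at this
    simp [Finsupp.single_apply] at this
  · intro E _; simp
  · intro x y _ _ hx hy E hE
    rw [coeff_add, hx E hE, hy E hE, add_zero]
  · intro c x _ hx E hE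
    rw [smul_eq_mul, coeff_mul]
    refine Finset.sum_eq_zero fun uv huv => ?_
    rw [Finset.HasAntidiagonal.mem_antidiagonal] at huv
    rw [hx uv.2 fun s => ?_, mul_zero]
    have : uv.2 s ≤ E s := by
      rw [← huv]; simp
    exact le_trans this (hE s)

end Aux


/-- Let `k` be a field of characteristic `p > 0`, let
`t ≥ 2p - 1`, and `R = k[x_1,…,x_t]/(x_1^3,…,x_t^3)`.  If all `a_s` are nonzero,
`y = ∑ a_s x_s` and `m = t + p - 1`, then `z_m ≠ 0` and `y · z_m = 0`; moreover
`t ≤ m < ⌈3t/2⌉`, so multiplication by `y` fails to be injective strictly below the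
middle degree (failure of weak Lefschetz). -/
theorem weak_lefschetz_fails_char_p (k : Type) [Field k] (p t : ℕ)
    (hchar : CharP k p) (hp : 0 < p) (hpt : 2 * p - 1 ≤ t) (a : Fin t → k)
    (ha : ∀ s : Fin t, a s ≠ 0) :
    zEl k t a (t + p - 1) ≠ 0 ∧
    yEl k t a * zEl k t a (t + p - 1) = 0 ∧
    t ≤ t + p - 1 ∧ 2 * (t + p - 1) < 3 * t := by
  classical
  have cproj_eq_zero : ∀ f : MvPolynomial (Fin t) k,
      (cproj k t f = 0 ↔ f ∈ Ideal.span {q : MvPolynomial (Fin t) k | ∃ s : Fin t, q = X s ^ 3}) :=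
    fun f => Ideal.Quotient.eq_zero_iff_mem
  set S : ℕ → Finset (Fin t → Fin 2) :=
    fun c => Finset.univ.filter (fun l : Fin t → Fin 2 => ∑ s, (l s : ℕ) = c) with hS
  have hmemS : ∀ c (l : Fin t → Fin 2), l ∈ S c ↔ ∑ s, (l s : ℕ) = c := by
    intro c l; simp [hS]
  have hF : (Finset.univ.filter
      (fun l : Fin t → Fin 2 => t + ∑ s, (l s : ℕ) = t + p - 1)) = S (p - 1) := by
    apply Finset.filter_congr
    intro l _
    constructor <;> intro h <;> omega
  have hz : zEl k t a (t + p - 1) = cproj k t (∑ l ∈ S (p - 1), Tm a l) := by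
    rw [zEl, hF, map_sum]
    rfl
  -- the distinguished index l₀
  set l₀ : Fin t → Fin 2 := fun s => if (s : ℕ) < p - 1 then 1 else 0 with hl₀
  have hl₀sum : ∑ s, ((l₀ s : ℕ)) = p - 1 := by
    have h1 : ∀ s : Fin t, ((l₀ s : ℕ)) = if (s : ℕ) < p - 1 then 1 else 0 := by
      intro s; simp only [hl₀]; split <;> rfl
    rw [Finset.sum_congr rfl (fun s _ => h1 s),
      Fin.sum_univ_eq_sum_range (fun i => if i < p - 1 then 1 else 0),
      ← Finset.sum_filter, Finset.sum_const, smul_eq_mul, mul_one]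
    have h2 : (Finset.range t).filter (fun i => i < p - 1) = Finset.range (p - 1) := by
      ext i
      simp only [Finset.mem_filter, Finset.mem_range]
      omega
    rw [h2, Finset.card_range]
  have hl₀mem : l₀ ∈ S (p - 1) := (hmemS _ _).mpr hl₀sum
  have hz0 : zEl k t a (t + p - 1) ≠ 0 := by
    rw [hz]
    intro h0
    have hmem := (cproj_eq_zero _).mp h0
    have hco := coeff_vanish hmem (expv t l₀)
      (fun s => by rw [expv_apply]; have := (l₀ s).isLt; omega)
    have hcv : coeff (expv t l₀) (∑ l ∈ S (p - 1), Tm a l) = ∏ s, a s ^ (l₀ s : ℕ) := by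
      rw [Finset.sum_congr rfl (fun l _ => Tm_eq a l), MvPolynomial.coeff_sum,
        Finset.sum_eq_single l₀]
      · rw [coeff_monomial, if_pos rfl]
      · intro l _ hne
        rw [coeff_monomial, if_neg (fun h => hne (expv_injective h))]
      · intro h; exact absurd hl₀mem h
    rw [hcv] at hco
    exact (Finset.prod_ne_zero_iff.mpr fun s _ => pow_ne_zero _ (ha s)) hco
  -- multiplication by y
  have hbad : ∀ (s : Fin t) (l : Fin t → Fin 2), l s = 1 →
      cproj k t (C (a s) * X s * Tm a l) = 0 := by
    intro s l h
    rw [cproj_eq_zero]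
    have he : C (a s) * X s * Tm a l
        = X s ^ 3 * (C (a s) ^ 2 *
          ∏ s' ∈ Finset.univ.erase s, (C (a s') ^ (l s' : ℕ) * X s' ^ ((l s' : ℕ) + 1))) := by
      simp only [Tm]
      rw [← Finset.mul_prod_erase _ _ (Finset.mem_univ s), h]
      simp only [Fin.val_one]
      ring
    rw [he]
    exact Ideal.mul_mem_right _ _ (Ideal.subset_span ⟨s, rfl⟩)
  have hgood : ∀ (s : Fin t) (l : Fin t → Fin 2), l s = 0 →
      C (a s) * X s * Tm a l = Tm a (Function.update l s 1) := by
    intro s l h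
    simp only [Tm]
    rw [← Finset.mul_prod_erase _ _ (Finset.mem_univ s),
      ← Finset.mul_prod_erase _ _ (Finset.mem_univ s), h, Function.update_self]
    have herase : ∏ s' ∈ Finset.univ.erase s,
          (C (a s') ^ ((Function.update l s 1 s' : ℕ)) *
            X s' ^ ((Function.update l s 1 s' : ℕ) + 1))
        = ∏ s' ∈ Finset.univ.erase s, (C (a s') ^ ((l s' : ℕ)) * X s' ^ ((l s' : ℕ) + 1)) :=
      Finset.prod_congr rfl fun s' hs' => by
        rw [Function.update_of_ne (Finset.ne_of_mem_erase hs')]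
    rw [herase]
    simp only [Fin.val_one, Fin.val_zero]
    ring
  have hy : yEl k t a * zEl k t a (t + p - 1)
      = ∑ s : Fin t, ∑ l ∈ S (p - 1), cproj k t (C (a s) * X s * Tm a l) := by
    rw [hz, yEl, map_sum, map_sum, Finset.sum_mul_sum]
    simp_rw [← map_mul]
  have hre : ∀ s : Fin t,
      ∑ l ∈ (S (p - 1)).filter (fun l => ¬ l s = 1), cproj k t (Tm a (Function.update l s 1))
      = ∑ l ∈ (S p).filter (fun l => l s = 1), cproj k t (Tm a l) := by
    intro s
    refine Finset.sum_nbij' (fun l => Function.update l s 1) (fun l => Function.update l s 0)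
      ?_ ?_ ?_ ?_ ?_
    · intro l hl
      rw [Finset.mem_filter] at hl ⊢
      obtain ⟨hl1, hl2⟩ := hl
      have hl0 : l s = 0 := fin2_eq_zero hl2
      rw [hmemS] at hl1
      have hsp := sum_split l s
      rw [hl0] at hsp
      refine ⟨(hmemS _ _).mpr ?_, Function.update_self _ _ _⟩
      rw [sum_update, Fin.val_one]
      simp only [Fin.val_zero] at hsp
      omega
    · intro l hl
      rw [Finset.mem_filter] at hl ⊢
      obtain ⟨hl1, hl2⟩ := hl
      rw [hmemS] at hl1
      have hsp := sum_split l s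
      rw [hl2] at hsp
      refine ⟨(hmemS _ _).mpr ?_, by simp [Function.update_self]⟩
      rw [sum_update, Fin.val_zero]
      simp only [Fin.val_one] at hsp
      omega
    · intro l hl
      rw [Finset.mem_filter] at hl
      have hl0 : l s = 0 := fin2_eq_zero hl.2
      funext s'
      by_cases hss : s' = s
      · subst hss; simp [Function.update_self, hl0]
      · simp [Function.update_of_ne hss]
    · intro l hl
      rw [Finset.mem_filter] at hl
      funext s'
      by_cases hss : s' = s
      · subst hss; simp [Function.update_self, hl.2]
      · simp [Function.update_of_ne hss]
    · exact fun l hl => rfl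
  have hcard : ∀ l ∈ S p, (Finset.univ.filter (fun s : Fin t => l s = 1)).card = p := by
    intro l hl
    rw [hmemS] at hl
    have h1 : ∑ s, (l s : ℕ) = ∑ s, if l s = 1 then 1 else 0 :=
      Finset.sum_congr rfl fun s _ => fin2_cast _
    rw [h1] at hl
    rw [← hl, ← Finset.sum_filter, Finset.sum_const, smul_eq_mul, mul_one]
  have hyz : yEl k t a * zEl k t a (t + p - 1) = 0 := by
    rw [hy]
    have hsplit : ∀ s : Fin t, ∑ l ∈ S (p - 1), cproj k t (C (a s) * X s * Tm a l)
        = ∑ l ∈ (S p).filter (fun l => l s = 1), cproj k t (Tm a l) := by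
      intro s
      rw [← Finset.sum_filter_add_sum_filter_not (S (p - 1)) (fun l => l s = 1)]
      rw [Finset.sum_eq_zero (fun l hl => hbad s l (Finset.mem_filter.mp hl).2), zero_add]
      rw [Finset.sum_congr rfl (fun l hl => by
        rw [hgood s l (fin2_eq_zero (Finset.mem_filter.mp hl).2)])]
      exact hre s
    rw [Finset.sum_congr rfl (fun s _ => hsplit s)]
    have hinner : ∀ s : Fin t, ∑ l ∈ (S p).filter (fun l => l s = 1), cproj k t (Tm a l)
        = ∑ l ∈ S p, if l s = 1 then cproj k t (Tm a l) else 0 := by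
      intro s; rw [Finset.sum_filter]
    rw [Finset.sum_congr rfl (fun s _ => hinner s), Finset.sum_comm]
    refine Finset.sum_eq_zero fun l hl => ?_
    rw [← Finset.sum_filter, Finset.sum_const, hcard l hl,
      ← Nat.cast_smul_eq_nsmul k p, CharP.cast_eq_zero k p, zero_smul]
  exact ⟨hz0, hyz, by omega, by omega⟩


end LocalFace
end
end
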